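/- Let T be a linear, trace-preserving, positive map on M_d(ℂ), Λ the set of eigenvalues of T different from 1, and Z(T) = (id − (T − T^∞))^{-1}. Then τ(Z(T)) ≥ 1 / min_{λ∈Λ} |1 − λ|. -/

import Mathlib

open Matrix Filter
open scoped ComplexOrder

/-- Trace norm (Schatten 1-norm) of a complex matrix: `tr √(XᴴX)`. -/
noncomputable def traceNorm {d : ℕ} (X : Matrix (Fin d) (Fin d) ℂ) : ℝ :=
  let hA := Matrix.posSemidef_conjTranspose_mul_self X
  (hA.1.eigenvectorUnitary.1 * diagonal (((↑) : ℝ → ℂ) ∘ Real.sqrt ∘ hA.1.eigenvalues) *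
    (star hA.1.eigenvectorUnitary : Matrix (Fin d) (Fin d) ℂ)).trace.re

/-- Linear endomorphisms of `M_d(ℂ)` (superoperators). -/
abbrev MatEnd (d : ℕ) := Module.End ℂ (Matrix (Fin d) (Fin d) ℂ)

/-- Trace-preserving map. -/
def IsTP {d : ℕ} (T : MatEnd d) : Prop := ∀ X, (T X).trace = X.trace

/-- Positive map: maps PSD matrices to PSD matrices. -/
def IsPos {d : ℕ} (T : MatEnd d) : Prop := ∀ X, X.PosSemidef → (T X).PosSemidef

/-- Hermiticity-preserving map. -/
def IsHP {d : ℕ} (T : MatEnd d) : Prop := ∀ X, (T X)ᴴ = T Xᴴ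

/-- Induced 1→1 norm: `sup_{X ≠ 0} ‖T X‖₁ / ‖X‖₁`. -/
noncomputable def norm1to1 {d : ℕ} (T : MatEnd d) : ℝ :=
  sSup {r | ∃ X, X ≠ 0 ∧ r = traceNorm (T X) / traceNorm X}

/-- Trace-norm contraction coefficient: sup over nonzero Hermitian traceless `σ`. -/
noncomputable def tau {d : ℕ} (T : MatEnd d) : ℝ :=
  sSup {r | ∃ σ : Matrix (Fin d) (Fin d) ℂ,
    σ.IsHermitian ∧ σ.trace = 0 ∧ σ ≠ 0 ∧ r = traceNorm (T σ) / traceNorm σ}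

/-- Density matrix: positive semidefinite with unit trace. -/
def IsDensity {d : ℕ} (ρ : Matrix (Fin d) (Fin d) ℂ) : Prop := ρ.PosSemidef ∧ ρ.trace = 1

/-- `Tinf` is the Cesàro-mean fixed point projection of `T`. -/
def IsCesaroProj {d : ℕ} (T Tinf : MatEnd d) : Prop :=
  ∀ X, Tendsto (fun n : ℕ => (n : ℂ)⁻¹ • ∑ k ∈ Finset.range n, (T ^ (k + 1)) X)
    atTop (nhds (Tinf X))

namespace TauAux

variable {d : ℕ}

/-- Linear equivalence of matrices with Euclidean space. -/
noncomputable def eqv (d : ℕ) : Matrix (Fin d) (Fin d) ℂ ≃ₗ[ℂ] EuclideanSpace ℂ (Fin d × Fin d) :=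
  (LinearEquiv.curry ℂ ℂ (Fin d) (Fin d)).symm.trans
    (WithLp.linearEquiv 2 ℂ (Fin d × Fin d → ℂ)).symm

lemma eqv_apply (X : Matrix (Fin d) (Fin d) ℂ) (p : Fin d × Fin d) :
    eqv d X p = X p.1 p.2 := rfl

/-- Frobenius norm. -/
noncomputable def fro (X : Matrix (Fin d) (Fin d) ℂ) : ℝ := ‖eqv d X‖

lemma fro_nonneg (X : Matrix (Fin d) (Fin d) ℂ) : 0 ≤ fro X := norm_nonneg _

lemma fro_add_le (X Y : Matrix (Fin d) (Fin d) ℂ) : fro (X + Y) ≤ fro X + fro Y := by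
  unfold fro; rw [map_add]; exact norm_add_le _ _

lemma fro_smul (c : ℂ) (X : Matrix (Fin d) (Fin d) ℂ) : fro (c • X) = ‖c‖ * fro X := by
  unfold fro; rw [_root_.map_smul, norm_smul]

lemma fro_pos {X : Matrix (Fin d) (Fin d) ℂ} (hX : X ≠ 0) : 0 < fro X := by
  have : eqv d X ≠ 0 := fun h => hX (by simpa using (eqv d).injective (by simpa using h))
  exact norm_pos_iff.mpr this

lemma fro_sq (X : Matrix (Fin d) (Fin d) ℂ) :
    fro X ^ 2 = ∑ i, ∑ j, ‖X i j‖ ^ 2 := by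
  have h := EuclideanSpace.norm_eq (eqv d X)
  have h2 : 0 ≤ ∑ p : Fin d × Fin d, ‖eqv d X p‖ ^ 2 :=
    Finset.sum_nonneg fun p _ => sq_nonneg _
  calc fro X ^ 2 = ∑ p : Fin d × Fin d, ‖eqv d X p‖ ^ 2 := by
        rw [fro, h, Real.sq_sqrt h2]
    _ = ∑ p : Fin d × Fin d, ‖X p.1 p.2‖ ^ 2 :=
        Finset.sum_congr rfl (fun p _ => by rw [eqv_apply])
    _ = ∑ i, ∑ j, ‖X i j‖ ^ 2 := Fintype.sum_prod_type _

lemma trace_unitary_conj {d : ℕ} (U : Matrix.unitaryGroup (Fin d) ℂ)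
    (B : Matrix (Fin d) (Fin d) ℂ) :
    ((U : Matrix (Fin d) (Fin d) ℂ) * B * star (U : Matrix (Fin d) (Fin d) ℂ)).trace
      = B.trace := by
  rw [Matrix.trace_mul_cycle]
  have h : star (U : Matrix (Fin d) (Fin d) ℂ) * (U : Matrix (Fin d) (Fin d) ℂ) = 1 :=
    (Unitary.mem_iff.mp U.2).1
  rw [h, Matrix.one_mul]

lemma trace_eq_sum_eigs {d : ℕ} {S : Matrix (Fin d) (Fin d) ℂ} (hS : S.IsHermitian) :
    S.trace = ∑ i, (hS.eigenvalues i : ℂ) := by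
  conv_lhs => rw [hS.spectral_theorem, Unitary.conjStarAlgAut_apply]
  rw [trace_unitary_conj, Matrix.trace_diagonal]
  simp [RCLike.ofReal]

lemma trace_mul_self_eq_sum_sq {d : ℕ} {S : Matrix (Fin d) (Fin d) ℂ} (hS : S.IsHermitian) :
    (S * S).trace = ∑ i, ((hS.eigenvalues i : ℂ)) ^ 2 := by
  set U : Matrix (Fin d) (Fin d) ℂ := (hS.eigenvectorUnitary : Matrix (Fin d) (Fin d) ℂ)
  set D : Matrix (Fin d) (Fin d) ℂ := Matrix.diagonal (RCLike.ofReal ∘ hS.eigenvalues)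
  have hUU : star U * U = 1 := (Unitary.mem_iff.mp hS.eigenvectorUnitary.2).1
  have hSS : S * S = U * (D * D) * star U := by
    conv_lhs => rw [hS.spectral_theorem, Unitary.conjStarAlgAut_apply]
    calc (U * D * star U) * (U * D * star U)
        = U * (D * ((star U * U) * (D * star U))) := by simp only [Matrix.mul_assoc]
      _ = U * (D * D) * star U := by rw [hUU, Matrix.one_mul]; simp only [Matrix.mul_assoc]
  rw [hSS, trace_unitary_conj hS.eigenvectorUnitary, Matrix.diagonal_mul_diagonal,
    Matrix.trace_diagonal]
  simp [sq, RCLike.ofReal]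

lemma trace_conjTranspose_mul_self_re {d : ℕ} (X : Matrix (Fin d) (Fin d) ℂ) :
    (Xᴴ * X).trace.re = ∑ i, ∑ j, ‖X i j‖ ^ 2 := by
  have h : (Xᴴ * X).trace = ∑ j, ∑ i, ((‖X i j‖ ^ 2 : ℝ) : ℂ) := by
    rw [Matrix.trace]
    refine Finset.sum_congr rfl fun j _ => ?_
    rw [Matrix.diag_apply, Matrix.mul_apply]
    refine Finset.sum_congr rfl fun i _ => ?_
    rw [Matrix.conjTranspose_apply]
    rw [Complex.star_def, mul_comm, Complex.mul_conj]
    norm_cast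
    rw [← Complex.sq_norm]
  rw [h]
  push_cast
  rw [Finset.sum_comm]
  norm_cast

section eigs

variable {d : ℕ} (X : Matrix (Fin d) (Fin d) ℂ)

private noncomputable def eigs (i : Fin d) : ℝ :=
  Real.sqrt ((Matrix.posSemidef_conjTranspose_mul_self X).1.eigenvalues i)

lemma eigs_nonneg (i : Fin d) : 0 ≤ eigs X i :=
  Real.sqrt_nonneg _

lemma traceNorm_eq_sum_eigs : traceNorm X = ∑ i, eigs X i := by
  dsimp only [traceNorm]
  rw [trace_unitary_conj, Matrix.trace_diagonal]
  rw [Complex.re_sum]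
  simp [eigs]

lemma fro_sq_eq_sum_sq_eigs : fro X ^ 2 = ∑ i, eigs X i ^ 2 := by
  have h1 : fro X ^ 2 = (Xᴴ * X).trace.re := by
    rw [fro_sq, trace_conjTranspose_mul_self_re]
  rw [h1, trace_eq_sum_eigs (Matrix.posSemidef_conjTranspose_mul_self X).1, Complex.re_sum]
  refine Finset.sum_congr rfl fun i _ => ?_
  rw [Complex.ofReal_re, eigs,
    Real.sq_sqrt ((Matrix.posSemidef_conjTranspose_mul_self X).eigenvalues_nonneg i)]

lemma fro_le_traceNorm : fro X ≤ traceNorm X := by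
  have h1 : fro X = Real.sqrt (∑ i, eigs X i ^ 2) := by
    rw [← fro_sq_eq_sum_sq_eigs, Real.sqrt_sq (fro_nonneg X)]
  have h2 : ∑ i, eigs X i ^ 2 ≤ (∑ i, eigs X i) ^ 2 :=
    Finset.sum_sq_le_sq_sum_of_nonneg fun i _ => eigs_nonneg X i
  rw [h1, traceNorm_eq_sum_eigs]
  calc Real.sqrt (∑ i, eigs X i ^ 2) ≤ Real.sqrt ((∑ i, eigs X i) ^ 2) :=
        Real.sqrt_le_sqrt h2
    _ = ∑ i, eigs X i := Real.sqrt_sq (Finset.sum_nonneg fun i _ => eigs_nonneg X i)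

lemma traceNorm_le_sqrt_card_mul_fro : traceNorm X ≤ Real.sqrt d * fro X := by
  have h1 : fro X = Real.sqrt (∑ i, eigs X i ^ 2) := by
    rw [← fro_sq_eq_sum_sq_eigs, Real.sqrt_sq (fro_nonneg X)]
  have h2 : (∑ i, eigs X i) ^ 2 ≤ (d : ℝ) * ∑ i, eigs X i ^ 2 := by
    have := sq_sum_le_card_mul_sum_sq (s := (Finset.univ : Finset (Fin d)))
      (f := eigs X)
    simpa using this
  rw [traceNorm_eq_sum_eigs, h1]
  calc ∑ i, eigs X i = Real.sqrt ((∑ i, eigs X i) ^ 2) :=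
        (Real.sqrt_sq (Finset.sum_nonneg fun i _ => eigs_nonneg X i)).symm
    _ ≤ Real.sqrt ((d : ℝ) * ∑ i, eigs X i ^ 2) := Real.sqrt_le_sqrt h2
    _ = Real.sqrt d * Real.sqrt (∑ i, eigs X i ^ 2) := Real.sqrt_mul (Nat.cast_nonneg d) _

lemma traceNorm_nonneg : 0 ≤ traceNorm X := (fro_nonneg X).trans (fro_le_traceNorm X)

lemma traceNorm_pos {X : Matrix (Fin d) (Fin d) ℂ} (hX : X ≠ 0) : 0 < traceNorm X :=
  lt_of_lt_of_le (fro_pos hX) (fro_le_traceNorm X)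

lemma traceNorm_zero : traceNorm (0 : Matrix (Fin d) (Fin d) ℂ) = 0 := by
  have h1 : fro (0 : Matrix (Fin d) (Fin d) ℂ) = 0 := by
    rw [fro, map_zero, norm_zero]
  have := traceNorm_le_sqrt_card_mul_fro (0 : Matrix (Fin d) (Fin d) ℂ)
  rw [h1, mul_zero] at this
  exact le_antisymm this (traceNorm_nonneg 0)

end eigs

section opbound

variable {d : ℕ}

lemma exists_opbound (Z : MatEnd d) :
    ∃ C : ℝ, 0 ≤ C ∧ ∀ X, traceNorm (Z X) ≤ C * traceNorm X := by
  classical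
  let L : EuclideanSpace ℂ (Fin d × Fin d) →L[ℂ] EuclideanSpace ℂ (Fin d × Fin d) :=
    LinearMap.toContinuousLinearMap
      ((eqv d).toLinearMap ∘ₗ (Z : Matrix (Fin d) (Fin d) ℂ →ₗ[ℂ] Matrix (Fin d) (Fin d) ℂ)
        ∘ₗ (eqv d).symm.toLinearMap)
  have key : ∀ X : Matrix (Fin d) (Fin d) ℂ, fro (Z X) ≤ ‖L‖ * fro X := by
    intro X
    have h1 : eqv d (Z X) = L (eqv d X) := by
      simp [L, LinearMap.coe_toContinuousLinearMap']
    rw [fro, h1, fro]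
    exact L.le_opNorm _
  refine ⟨Real.sqrt d * ‖L‖, by positivity, fun X => ?_⟩
  calc traceNorm (Z X) ≤ Real.sqrt d * fro (Z X) := traceNorm_le_sqrt_card_mul_fro _
    _ ≤ Real.sqrt d * (‖L‖ * fro X) := by
        have := key X
        gcongr
    _ ≤ Real.sqrt d * (‖L‖ * traceNorm X) := by
        have := fro_le_traceNorm X
        gcongr
    _ = Real.sqrt d * ‖L‖ * traceNorm X := by ring

lemma tau_bddAbove (Z : MatEnd d) :
    BddAbove {r | ∃ σ : Matrix (Fin d) (Fin d) ℂ,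
      σ.IsHermitian ∧ σ.trace = 0 ∧ σ ≠ 0 ∧ r = traceNorm (Z σ) / traceNorm σ} := by
  obtain ⟨C, _, hC⟩ := exists_opbound Z
  refine ⟨C, ?_⟩
  rintro r ⟨σ, hH, ht, hne, rfl⟩
  rw [div_le_iff₀ (traceNorm_pos hne)]
  exact hC σ

lemma tau_bound (Z : MatEnd d) {σ : Matrix (Fin d) (Fin d) ℂ}
    (hH : σ.IsHermitian) (ht : σ.trace = 0) :
    traceNorm (Z σ) ≤ tau Z * traceNorm σ := by
  by_cases hσ : σ = 0
  · subst hσ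
    rw [map_zero, traceNorm_zero, mul_zero]
  · have hmem : traceNorm (Z σ) / traceNorm σ ∈ {r | ∃ σ : Matrix (Fin d) (Fin d) ℂ,
        σ.IsHermitian ∧ σ.trace = 0 ∧ σ ≠ 0 ∧ r = traceNorm (Z σ) / traceNorm σ} :=
      ⟨σ, hH, ht, hσ, rfl⟩
    have := le_csSup (tau_bddAbove Z) hmem
    rw [div_le_iff₀ (traceNorm_pos hσ)] at this
    exact this

lemma tau_nonneg (Z : MatEnd d) {σ : Matrix (Fin d) (Fin d) ℂ}
    (hH : σ.IsHermitian) (ht : σ.trace = 0) (hne : σ ≠ 0) : 0 ≤ tau Z := by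
  have hmem : traceNorm (Z σ) / traceNorm σ ∈ {r | ∃ σ : Matrix (Fin d) (Fin d) ℂ,
      σ.IsHermitian ∧ σ.trace = 0 ∧ σ ≠ 0 ∧ r = traceNorm (Z σ) / traceNorm σ} :=
    ⟨σ, hH, ht, hne, rfl⟩
  exact le_trans (div_nonneg (traceNorm_nonneg _) (traceNorm_nonneg _))
    (le_csSup (tau_bddAbove Z) hmem)

end opbound

section cesaro

lemma scalar_cesaro {ν : ℂ} (hν1 : ν ≠ 1) {c : ℂ}
    (h : Tendsto (fun n : ℕ => (n : ℂ)⁻¹ * ∑ k ∈ Finset.range n, ν ^ (k + 1)) atTop (nhds c)) :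
    c = 0 := by
  by_cases hν0 : ν = 0
  · subst hν0
    have heq : (fun n : ℕ => (n : ℂ)⁻¹ * ∑ k ∈ Finset.range n, (0:ℂ) ^ (k + 1))
        = fun _ => 0 := by
      funext n; simp
    rw [heq] at h
    exact (tendsto_nhds_unique h tendsto_const_nhds).symm ▸ rfl
  · have hν1' : ν - 1 ≠ 0 := sub_ne_zero.mpr hν1
    set L : ℂ := c * ((ν - 1) / ν) with hLdef
    have hinv0 : Tendsto (fun n : ℕ => ((n : ℂ))⁻¹) atTop (nhds 0) := by
      have hr : Tendsto (fun n : ℕ => ((n : ℝ))⁻¹) atTop (nhds 0) := by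
        simpa using tendsto_one_div_atTop_nhds_zero_nat (𝕜 := ℝ)
      have h2 := (Complex.continuous_ofReal.tendsto 0).comp hr
      rw [Complex.ofReal_zero] at h2
      exact h2.congr fun n => by simp [Function.comp]
    have hL : Tendsto (fun n : ℕ => ν ^ n / (n : ℂ)) atTop (nhds L) := by
      have h2 := (h.mul_const ((ν - 1) / ν)).add hinv0
      rw [add_zero] at h2
      refine Tendsto.congr' ?_ h2
      filter_upwards [eventually_ge_atTop 1] with n hn
      have hn0 : (n : ℂ) ≠ 0 := Nat.cast_ne_zero.mpr (by omega)
      have hgeom : ∑ k ∈ Finset.range n, ν ^ (k + 1) = ν * ((ν ^ n - 1) / (ν - 1)) := by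
        rw [← geom_sum_eq hν1 n, Finset.mul_sum]
        exact Finset.sum_congr rfl fun k _ => pow_succ' ν k
      rw [hgeom]
      field_simp
      ring
    have hnorm_le : ‖ν‖ ≤ 1 := by
      by_contra hgt
      push_neg at hgt
      have hinv : ‖ν⁻¹‖ < 1 := by
        rw [norm_inv]
        exact inv_lt_one_of_one_lt₀ hgt
      have hsum : Summable (fun n : ℕ => ‖((n : ℂ) ^ 1 * (ν⁻¹) ^ n : ℂ)‖) :=
        summable_norm_pow_mul_geometric_of_norm_lt_one 1 hinv
      have hg : Tendsto (fun n : ℕ => ((n : ℂ) * (ν⁻¹) ^ n)) atTop (nhds 0) := by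
        have := (Summable.of_norm hsum).tendsto_atTop_zero
        simpa using this
      have hprod := hL.mul hg
      rw [mul_zero] at hprod
      have hone : Tendsto (fun _ : ℕ => (1 : ℂ)) atTop (nhds 0) := by
        refine Tendsto.congr' ?_ hprod
        filter_upwards [eventually_ge_atTop 1] with n hn
        have hn0 : (n : ℂ) ≠ 0 := Nat.cast_ne_zero.mpr (by omega)
        have hνn : ν ^ n ≠ 0 := pow_ne_zero n hν0
        field_simp
        rw [one_div, inv_pow, mul_inv_cancel₀ hνn]
      exact one_ne_zero (tendsto_nhds_unique tendsto_const_nhds hone)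
    have hL0 : Tendsto (fun n : ℕ => ν ^ n / (n : ℂ)) atTop (nhds 0) := by
      apply squeeze_zero_norm (fun n => ?_) tendsto_one_div_atTop_nhds_zero_nat
      rw [norm_div, norm_pow, Complex.norm_natCast]
      rcases Nat.eq_zero_or_pos n with hn | hn
      · subst hn; simp
      · have hn' : (0:ℝ) < n := by exact_mod_cast hn
        gcongr
        exact pow_le_one₀ (norm_nonneg _) hnorm_le
    have hLz : L = 0 := tendsto_nhds_unique hL hL0
    rw [hLdef] at hLz
    rcases mul_eq_zero.mp hLz with hc | hd
    · exact hc
    · exact absurd hd (div_ne_zero hν1' hν0)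

end cesaro

lemma cesaro_eigen {d : ℕ} {T Tinf : MatEnd d} (hinf : IsCesaroProj T Tinf)
    {ν : ℂ} (hν1 : ν ≠ 1) {Y : Matrix (Fin d) (Fin d) ℂ} (hY : Y ≠ 0)
    (hTY : T Y = ν • Y) : Tinf Y = 0 := by
  have hpow : ∀ k : ℕ, (T ^ k) Y = ν ^ k • Y := by
    intro k
    induction k with
    | zero => simp
    | succ k ih =>
      rw [pow_succ, Module.End.mul_apply, hTY, _root_.map_smul, ih, smul_smul, ← pow_succ']
  have hseq : ∀ n : ℕ, (n : ℂ)⁻¹ • ∑ k ∈ Finset.range n, (T ^ (k + 1)) Y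
      = ((n : ℂ)⁻¹ * ∑ k ∈ Finset.range n, ν ^ (k + 1)) • Y := by
    intro n
    simp_rw [hpow]
    rw [← Finset.sum_smul, smul_smul]
  have h1 := hinf Y
  rw [show (fun n : ℕ => (n : ℂ)⁻¹ • ∑ k ∈ Finset.range n, (T ^ (k + 1)) Y)
      = fun n : ℕ => ((n : ℂ)⁻¹ * ∑ k ∈ Finset.range n, ν ^ (k + 1)) • Y from funext hseq] at h1
  obtain ⟨i, j, hij⟩ : ∃ i j, Y i j ≠ 0 := by
    by_contra hc
    push_neg at hc
    exact hY (by ext i j; exact hc i j)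
  have hc2 : Continuous (fun M : Matrix (Fin d) (Fin d) ℂ => M i j) :=
    (continuous_apply j).comp (continuous_apply i)
  have h2 : Tendsto (fun n : ℕ => ((n : ℂ)⁻¹ * ∑ k ∈ Finset.range n, ν ^ (k + 1)) * Y i j)
      atTop (nhds ((Tinf Y) i j)) := by
    have := (hc2.tendsto _).comp h1
    simpa [Function.comp_def, Matrix.smul_apply, smul_eq_mul] using this
  have h3 : Tendsto (fun n : ℕ => ((n : ℂ)⁻¹ * ∑ k ∈ Finset.range n, ν ^ (k + 1)))
      atTop (nhds ((Tinf Y) i j * (Y i j)⁻¹)) := by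
    have := h2.mul_const (Y i j)⁻¹
    refine this.congr fun n => ?_
    rw [mul_assoc, mul_inv_cancel₀ hij, mul_one]
  have hc0 : (Tinf Y) i j * (Y i j)⁻¹ = 0 := scalar_cesaro hν1 h3
  rw [hc0] at h3
  have h5 : Tendsto (fun n : ℕ => ((n : ℂ)⁻¹ * ∑ k ∈ Finset.range n, ν ^ (k + 1)) • Y)
      atTop (nhds ((0 : ℂ) • Y)) := h3.smul_const Y
  rw [zero_smul] at h5
  exact tendsto_nhds_unique h1 h5

lemma herm_decomp {d : ℕ} {H : Matrix (Fin d) (Fin d) ℂ} (hH : H.IsHermitian) :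
    ∃ P Q : Matrix (Fin d) (Fin d) ℂ, P.PosSemidef ∧ Q.PosSemidef ∧ H = P - Q := by
  classical
  set U : Matrix (Fin d) (Fin d) ℂ := (hH.eigenvectorUnitary : Matrix (Fin d) (Fin d) ℂ) with hU
  have hpos : ∀ f : Fin d → ℝ, (∀ i, 0 ≤ f i) →
      (U * Matrix.diagonal (fun i => ((f i : ℝ) : ℂ)) * star U).PosSemidef := by
    intro f hf
    have hd : (Matrix.diagonal (fun i => ((f i : ℝ) : ℂ))).PosSemidef :=
      Matrix.posSemidef_diagonal_iff.mpr fun i => by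
        rw [Complex.zero_le_real]
        exact hf i
    have := hd.mul_mul_conjTranspose_same U
    simpa [Matrix.star_eq_conjTranspose] using this
  refine ⟨U * Matrix.diagonal (fun i => ((max (hH.eigenvalues i) 0 : ℝ) : ℂ)) * star U,
      U * Matrix.diagonal (fun i => ((max (-(hH.eigenvalues i)) 0 : ℝ) : ℂ)) * star U,
      hpos _ (fun i => le_max_right _ _), hpos _ (fun i => le_max_right _ _), ?_⟩
  conv_lhs => rw [hH.spectral_theorem, Unitary.conjStarAlgAut_apply]
  have hfun : (RCLike.ofReal ∘ hH.eigenvalues : Fin d → ℂ) =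
      fun i => ((max (hH.eigenvalues i) 0 : ℝ) : ℂ) - ((max (-(hH.eigenvalues i)) 0 : ℝ) : ℂ) := by
    funext i
    rw [Function.comp_apply, ← Complex.ofReal_sub, max_zero_sub_max_neg_zero_eq_self]
    rfl
  rw [hfun, ← Matrix.diagonal_sub, Matrix.mul_sub, Matrix.sub_mul]

lemma herm_parts {d : ℕ} (X : Matrix (Fin d) (Fin d) ℂ) :
    ∃ H K : Matrix (Fin d) (Fin d) ℂ, H.IsHermitian ∧ K.IsHermitian ∧
      X = H + Complex.I • K ∧ Xᴴ = H - Complex.I • K := by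
  refine ⟨(2⁻¹ : ℂ) • (X + Xᴴ), (-(Complex.I / 2)) • (X - Xᴴ), ?_, ?_, ?_, ?_⟩
  · rw [Matrix.IsHermitian, Matrix.conjTranspose_smul, Matrix.conjTranspose_add,
      Matrix.conjTranspose_conjTranspose, show star (2⁻¹ : ℂ) = (2⁻¹ : ℂ) by simp, add_comm]
  · rw [Matrix.IsHermitian, Matrix.conjTranspose_smul, Matrix.conjTranspose_sub,
      Matrix.conjTranspose_conjTranspose,
      show star (-(Complex.I / 2)) = Complex.I / 2 by simp; ring,
      show Xᴴ - X = -(X - Xᴴ) by abel, smul_neg, ← neg_smul]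
  · match_scalars <;>
      first
        | linear_combination (-(4⁻¹ : ℂ)) * Complex.I_mul_I
        | linear_combination ((4⁻¹ : ℂ)) * Complex.I_mul_I
        | linear_combination (-(2⁻¹ : ℂ)) * Complex.I_mul_I
        | linear_combination ((2⁻¹ : ℂ)) * Complex.I_mul_I
  · match_scalars <;>
      first
        | linear_combination (-(4⁻¹ : ℂ)) * Complex.I_mul_I
        | linear_combination ((4⁻¹ : ℂ)) * Complex.I_mul_I
        | linear_combination (-(2⁻¹ : ℂ)) * Complex.I_mul_I
        | linear_combination ((2⁻¹ : ℂ)) * Complex.I_mul_I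

lemma isHP_of_isPos {d : ℕ} {T : MatEnd d} (hPos : IsPos T) : IsHP T := by
  have hherm : ∀ H : Matrix (Fin d) (Fin d) ℂ, H.IsHermitian → (T H).IsHermitian := by
    intro H hH
    obtain ⟨P, Q, hP, hQ, rfl⟩ := herm_decomp hH
    rw [map_sub]
    exact ((hPos P hP).1).sub ((hPos Q hQ).1)
  intro X
  obtain ⟨H, K, hHh, hKh, hX, hXH⟩ := herm_parts X
  calc (T X)ᴴ = (T H + Complex.I • T K)ᴴ := by
        rw [hX, map_add, _root_.map_smul]
    _ = (T H)ᴴ + star Complex.I • (T K)ᴴ := by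
        rw [Matrix.conjTranspose_add, Matrix.conjTranspose_smul]
    _ = T H - Complex.I • T K := by
        rw [hherm H hHh, hherm K hKh, show star Complex.I = -Complex.I by simp,
          neg_smul, ← sub_eq_add_neg]
    _ = T Xᴴ := by
        rw [hXH, map_sub, _root_.map_smul]

section key

variable {d : ℕ}

lemma key_bound (Z : MatEnd d) (X : Matrix (Fin d) (Fin d) ℂ) (μ : ℂ)
    (hZX : Z X = μ • X) (hZXH : Z Xᴴ = (starRingEnd ℂ) μ • Xᴴ)
    (htr : X.trace = 0) (hXne : X ≠ 0) :
    ‖μ‖ ≤ tau Z := by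
  classical
  set ν : ℂ := (starRingEnd ℂ) μ with hνdef
  have htrH : Xᴴ.trace = 0 := by rw [Matrix.trace_conjTranspose, htr, star_zero]
  -- the Hermitian/anti-Hermitian parts of μ^n • X
  have hHherm : ∀ n : ℕ, ((2⁻¹ : ℂ) • (μ ^ n • X + ν ^ n • Xᴴ)).IsHermitian := by
    intro n
    rw [Matrix.IsHermitian]
    simp only [Matrix.conjTranspose_smul, Matrix.conjTranspose_add,
      Matrix.conjTranspose_conjTranspose, star_pow, hνdef]
    simp only [Complex.star_def, Complex.conj_conj]
    simp only [show (starRingEnd ℂ) (2⁻¹ : ℂ) = (2⁻¹ : ℂ) by rw [map_inv₀, map_ofNat]]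
    match_scalars <;> ring
  have hKherm : ∀ n : ℕ, ((-(Complex.I / 2)) • (μ ^ n • X - ν ^ n • Xᴴ)).IsHermitian := by
    intro n
    rw [Matrix.IsHermitian]
    simp only [Matrix.conjTranspose_smul, Matrix.conjTranspose_sub,
      Matrix.conjTranspose_conjTranspose, star_pow, hνdef]
    simp only [Complex.star_def, Complex.conj_conj]
    simp only [show (starRingEnd ℂ) (-(Complex.I / 2)) = Complex.I / 2 by rw [map_neg, map_div₀, Complex.conj_I, map_ofNat]; ring]
    match_scalars <;> ring
  have hHtr : ∀ n : ℕ, ((2⁻¹ : ℂ) • (μ ^ n • X + ν ^ n • Xᴴ)).trace = 0 := by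
    intro n
    rw [Matrix.trace_smul, Matrix.trace_add, Matrix.trace_smul, Matrix.trace_smul,
      htr, htrH, smul_zero, smul_zero, add_zero, smul_zero]
  have hKtr : ∀ n : ℕ, ((-(Complex.I / 2)) • (μ ^ n • X - ν ^ n • Xᴴ)).trace = 0 := by
    intro n
    rw [Matrix.trace_smul, Matrix.trace_sub, Matrix.trace_smul, Matrix.trace_smul,
      htr, htrH, smul_zero, smul_zero, sub_zero, smul_zero]
  have hZH : ∀ n : ℕ, Z ((2⁻¹ : ℂ) • (μ ^ n • X + ν ^ n • Xᴴ))
      = (2⁻¹ : ℂ) • (μ ^ (n + 1) • X + ν ^ (n + 1) • Xᴴ) := by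
    intro n
    rw [_root_.map_smul, map_add, _root_.map_smul, _root_.map_smul, hZX, hZXH,
      smul_smul, smul_smul, ← pow_succ, ← pow_succ]
  have hZK : ∀ n : ℕ, Z ((-(Complex.I / 2)) • (μ ^ n • X - ν ^ n • Xᴴ))
      = (-(Complex.I / 2)) • (μ ^ (n + 1) • X - ν ^ (n + 1) • Xᴴ) := by
    intro n
    rw [_root_.map_smul, map_sub, _root_.map_smul, _root_.map_smul, hZX, hZXH,
      smul_smul, smul_smul, ← pow_succ, ← pow_succ]
  have hsum : ∀ n : ℕ, (2⁻¹ : ℂ) • (μ ^ n • X + ν ^ n • Xᴴ)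
      + Complex.I • ((-(Complex.I / 2)) • (μ ^ n • X - ν ^ n • Xᴴ)) = μ ^ n • X := by
    intro n
    match_scalars
    · linear_combination (-(2⁻¹ : ℂ) * μ ^ n) * Complex.I_mul_I
    · linear_combination ((2⁻¹ : ℂ) * ν ^ n) * Complex.I_mul_I
  have hone : (2⁻¹ : ℂ) • (μ ^ 0 • X + ν ^ 0 • Xᴴ) ≠ 0
      ∨ (-(Complex.I / 2)) • (μ ^ 0 • X - ν ^ 0 • Xᴴ) ≠ 0 := by
    by_contra h
    push_neg at h
    obtain ⟨h1, h2⟩ := h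
    apply hXne
    have h3 := hsum 0
    rw [h1, h2, smul_zero, add_zero, pow_zero, one_smul] at h3
    exact h3.symm
  have hτ0 : 0 ≤ tau Z := by
    rcases hone with h | h
    · exact tau_nonneg Z (hHherm 0) (hHtr 0) h
    · exact tau_nonneg Z (hKherm 0) (hKtr 0) h
  have hHbound : ∀ n : ℕ, traceNorm ((2⁻¹ : ℂ) • (μ ^ n • X + ν ^ n • Xᴴ))
      ≤ (tau Z) ^ n * traceNorm ((2⁻¹ : ℂ) • (μ ^ 0 • X + ν ^ 0 • Xᴴ)) := by
    intro n
    induction n with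
    | zero => simp
    | succ n ih =>
      calc traceNorm ((2⁻¹ : ℂ) • (μ ^ (n + 1) • X + ν ^ (n + 1) • Xᴴ))
          = traceNorm (Z ((2⁻¹ : ℂ) • (μ ^ n • X + ν ^ n • Xᴴ))) := by rw [hZH n]
        _ ≤ tau Z * traceNorm ((2⁻¹ : ℂ) • (μ ^ n • X + ν ^ n • Xᴴ)) :=
            tau_bound Z (hHherm n) (hHtr n)
        _ ≤ tau Z * ((tau Z) ^ n * traceNorm ((2⁻¹ : ℂ) • (μ ^ 0 • X + ν ^ 0 • Xᴴ))) :=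
            mul_le_mul_of_nonneg_left ih hτ0
        _ = (tau Z) ^ (n + 1) * traceNorm ((2⁻¹ : ℂ) • (μ ^ 0 • X + ν ^ 0 • Xᴴ)) := by ring
  have hKbound : ∀ n : ℕ, traceNorm ((-(Complex.I / 2)) • (μ ^ n • X - ν ^ n • Xᴴ))
      ≤ (tau Z) ^ n * traceNorm ((-(Complex.I / 2)) • (μ ^ 0 • X - ν ^ 0 • Xᴴ)) := by
    intro n
    induction n with
    | zero => simp
    | succ n ih =>
      calc traceNorm ((-(Complex.I / 2)) • (μ ^ (n + 1) • X - ν ^ (n + 1) • Xᴴ))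
          = traceNorm (Z ((-(Complex.I / 2)) • (μ ^ n • X - ν ^ n • Xᴴ))) := by rw [hZK n]
        _ ≤ tau Z * traceNorm ((-(Complex.I / 2)) • (μ ^ n • X - ν ^ n • Xᴴ)) :=
            tau_bound Z (hKherm n) (hKtr n)
        _ ≤ tau Z * ((tau Z) ^ n * traceNorm ((-(Complex.I / 2)) • (μ ^ 0 • X - ν ^ 0 • Xᴴ))) :=
            mul_le_mul_of_nonneg_left ih hτ0
        _ = (tau Z) ^ (n + 1)
            * traceNorm ((-(Complex.I / 2)) • (μ ^ 0 • X - ν ^ 0 • Xᴴ)) := by ring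
  set C : ℝ := traceNorm ((2⁻¹ : ℂ) • (μ ^ 0 • X + ν ^ 0 • Xᴴ))
      + traceNorm ((-(Complex.I / 2)) • (μ ^ 0 • X - ν ^ 0 • Xᴴ)) with hCdef
  have hmain : ∀ n : ℕ, ‖μ‖ ^ n * fro X ≤ (tau Z) ^ n * C := by
    intro n
    calc ‖μ‖ ^ n * fro X = fro (μ ^ n • X) := by rw [fro_smul, norm_pow]
      _ = fro ((2⁻¹ : ℂ) • (μ ^ n • X + ν ^ n • Xᴴ)
            + Complex.I • ((-(Complex.I / 2)) • (μ ^ n • X - ν ^ n • Xᴴ))) := by rw [hsum n]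
      _ ≤ fro ((2⁻¹ : ℂ) • (μ ^ n • X + ν ^ n • Xᴴ))
            + fro (Complex.I • ((-(Complex.I / 2)) • (μ ^ n • X - ν ^ n • Xᴴ))) :=
          fro_add_le _ _
      _ = fro ((2⁻¹ : ℂ) • (μ ^ n • X + ν ^ n • Xᴴ))
            + fro ((-(Complex.I / 2)) • (μ ^ n • X - ν ^ n • Xᴴ)) := by
          rw [fro_smul Complex.I, Complex.norm_I, one_mul]
      _ ≤ traceNorm ((2⁻¹ : ℂ) • (μ ^ n • X + ν ^ n • Xᴴ))
            + traceNorm ((-(Complex.I / 2)) • (μ ^ n • X - ν ^ n • Xᴴ)) :=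
          add_le_add (fro_le_traceNorm _) (fro_le_traceNorm _)
      _ ≤ (tau Z) ^ n * C := by
          rw [hCdef, mul_add]
          exact add_le_add (hHbound n) (hKbound n)
  by_contra hlt
  push_neg at hlt
  have hμpos : 0 < ‖μ‖ := lt_of_le_of_lt hτ0 hlt
  have hr1 : tau Z / ‖μ‖ < 1 := (div_lt_one hμpos).mpr hlt
  have hr0 : 0 ≤ tau Z / ‖μ‖ := div_nonneg hτ0 (norm_nonneg μ)
  have hfro : ∀ n : ℕ, fro X ≤ (tau Z / ‖μ‖) ^ n * C := by
    intro n
    have h1 := hmain n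
    have h2 : 0 < ‖μ‖ ^ n := pow_pos hμpos n
    rw [div_pow, div_mul_eq_mul_div, le_div_iff₀ h2]
    calc fro X * ‖μ‖ ^ n = ‖μ‖ ^ n * fro X := mul_comm _ _
      _ ≤ tau Z ^ n * C := h1
  have hlim : Tendsto (fun n : ℕ => (tau Z / ‖μ‖) ^ n * C) atTop (nhds 0) := by
    have := (tendsto_pow_atTop_nhds_zero_of_lt_one hr0 hr1).mul_const C
    simpa using this
  have hle0 : fro X ≤ 0 := ge_of_tendsto hlim (Filter.Eventually.of_forall hfro)
  exact absurd hle0 (not_le.mpr (fro_pos hXne))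

end key

end TauAux





/-- lower spectral bound `τ(Z(T)) ≥ 1/min_{λ∈Λ}|1−λ|`, expressed as:
for every non-unit eigenvalue `λ` of `T`, `1/|1−λ| ≤ τ(Z(T))`. -/
theorem tau_Z_lower_spectral_bound {d : ℕ} (T Tinf Z : MatEnd d)
    (hTP : IsTP T) (hPos : IsPos T) (hinf : IsCesaroProj T Tinf)
    (hZ₁ : Z * (1 - (T - Tinf)) = 1) (hZ₂ : (1 - (T - Tinf)) * Z = 1) :
    ∀ lam : ℂ, lam ≠ 1 → Module.End.HasEigenvalue T lam →
      1 / ‖(1 : ℂ) - lam‖ ≤ tau Z := by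
  classical
  intro lam hlam1 heig
  obtain ⟨X, hXv⟩ := heig.exists_hasEigenvector
  have hTX : T X = lam • X := hXv.apply_eq_smul
  have hXne : X ≠ 0 := hXv.2
  have h1lam : (1 : ℂ) - lam ≠ 0 := sub_ne_zero.mpr (Ne.symm hlam1)
  have hHP : IsHP T := TauAux.isHP_of_isPos hPos
  have hTXH : T Xᴴ = (starRingEnd ℂ) lam • Xᴴ := by
    rw [← hHP X, hTX, Matrix.conjTranspose_smul]
    rfl
  have htr : X.trace = 0 := by
    have h0 := hTP X
    rw [hTX, Matrix.trace_smul, smul_eq_mul] at h0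
    have h2 : (lam - 1) * X.trace = 0 := by rw [sub_mul, h0, one_mul, sub_self]
    rcases mul_eq_zero.mp h2 with h | h
    · exact absurd (by linear_combination h) hlam1
    · exact h
  have hXHne : Xᴴ ≠ 0 := fun h => hXne (by
    have h2 := congrArg Matrix.conjTranspose h
    simpa using h2)
  have hTinfX : Tinf X = 0 := TauAux.cesaro_eigen hinf hlam1 hXne hTX
  have hlamH1 : (starRingEnd ℂ) lam ≠ 1 := fun h => hlam1 (by
    have h2 := congrArg (starRingEnd ℂ) h
    simpa using h2)
  have hTinfXH : Tinf Xᴴ = 0 := TauAux.cesaro_eigen hinf hlamH1 hXHne hTXH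
  have hconj1 : (1 : ℂ) - (starRingEnd ℂ) lam ≠ 0 := sub_ne_zero.mpr (Ne.symm hlamH1)
  -- Z acts on the eigendirections
  have hZact : ∀ (Y : Matrix (Fin d) (Fin d) ℂ) (a : ℂ), (1 : ℂ) - a ≠ 0 →
      T Y = a • Y → Tinf Y = 0 → Z Y = (1 - a)⁻¹ • Y := by
    intro Y a ha hTY hTinfY
    have hSY : (1 - (T - Tinf)) Y = (1 - a) • Y := by
      rw [LinearMap.sub_apply, LinearMap.sub_apply, Module.End.one_apply, hTY, hTinfY,
        sub_zero, sub_smul, one_smul]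
    have h0 : Z ((1 - (T - Tinf)) Y) = Y := by
      rw [← Module.End.mul_apply, hZ₁, Module.End.one_apply]
    rw [hSY, _root_.map_smul] at h0
    calc Z Y = (1 - a)⁻¹ • ((1 - a) • Z Y) := by
          rw [smul_smul, inv_mul_cancel₀ ha, one_smul]
      _ = (1 - a)⁻¹ • Y := by rw [h0]
  have hZX : Z X = (1 - lam)⁻¹ • X := hZact X lam h1lam hTX hTinfX
  have hZXH : Z Xᴴ = (starRingEnd ℂ) ((1 - lam)⁻¹) • Xᴴ := by
    have h2 := hZact Xᴴ ((starRingEnd ℂ) lam) hconj1 hTXH hTinfXH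
    rw [h2, map_inv₀, map_sub, _root_.map_one]
  have hkey := TauAux.key_bound Z X ((1 - lam)⁻¹) hZX hZXH htr hXne
  calc 1 / ‖(1 : ℂ) - lam‖ = ‖((1 : ℂ) - lam)⁻¹‖ := by rw [norm_inv, one_div]
    _ ≤ tau Z := hkey
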